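/- Let h: [0,∞) → [0,∞) be nondecreasing, let L, w ≥ 1, and let A be the L×(L+w̃−1) matrix with A_{i,j} = (1/w̃)·1{1 ≤ j−i+1 ≤ w̃}, and let B' be the L×L matrix with B'_{i,j} = (1/w̃)·1{|i−j| < w}, where w̃ = 2w−1. Consider the recursions y^{(ℓ)} = Aᵀ h(A h(y^{(ℓ-1)})) on R^{L+w̃−1} and z^{(ℓ)} = B' h(B' h(z^{(ℓ-1)})) on R^L, with initial conditions such that the center L entries of y^{(0)} dominate z^{(0)} componentwise and y^{(0)} ⪰ 0, z^{(0)} ⪰ 0. Writing y^{(ℓ)} = (y_t^{(ℓ)}, y_c^{(ℓ)}, y_b^{(ℓ)}) with top w−1, center L, and bottom w−1 entries, one has y_c^{(ℓ)} ⪰ z^{(ℓ)} componentwise for all ℓ ≥ 0. In particular, if y^{(ℓ)} → 0 then z^{(ℓ)} → 0. -/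

import Mathlib

/-- `A i j = 1/w̃` iff `i ≤ j < i + w̃` (0-indexed), an `L × (L + w̃ − 1)` matrix. -/
noncomputable def bandMat (L wt : ℕ) : Matrix (Fin L) (Fin (L + wt - 1)) ℝ :=
  fun i j => if (i : ℕ) ≤ j ∧ (j : ℕ) < i + wt then (1 : ℝ) / wt else 0

/-- `B' i j = 1/w̃` iff `|i − j| < w`, an `L × L` matrix, with `w̃ = 2w − 1`. -/
noncomputable def braidMat (L w : ℕ) : Matrix (Fin L) (Fin L) ℝ :=
  fun i j => if |(i : ℤ) - (j : ℤ)| < w then (1 : ℝ) / (2 * w - 1) else 0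

lemma bandMat_nn (L wt : ℕ) (i : Fin L) (j : Fin (L + wt - 1)) : 0 ≤ bandMat L wt i j := by
  unfold bandMat; split <;> positivity

lemma braidMat_nn (L w : ℕ) (hw : 1 ≤ w) (i j : Fin L) : 0 ≤ braidMat L w i j := by
  have hwr : (1:ℝ) ≤ (w:ℝ) := by exact_mod_cast hw
  unfold braidMat; split
  · apply div_nonneg <;> linarith
  · exact le_refl _

lemma cidx_lt (L w : ℕ) (hw : 1 ≤ w) (j : Fin L) : w-1+j.val < L + (2*w-1) - 1 := by
  have := j.isLt; omega

lemma band_center (L w : ℕ) (hw : 1 ≤ w) (i j : Fin L) :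
    bandMat L (2*w-1) i ⟨w-1+j.val, cidx_lt L w hw j⟩ = braidMat L w i j := by
  unfold bandMat braidMat
  have hc : ((2*w-1 : ℕ):ℝ) = 2*(w:ℝ)-1 := by
    push_cast [Nat.cast_sub (by omega : 1 ≤ 2*w)]; ring
  have hiff : ((i:ℕ) ≤ w-1+j.val ∧ w-1+j.val < (i:ℕ) + (2*w-1)) ↔ |(i:ℤ)-(j:ℤ)| < (w:ℤ) := by
    rw [abs_lt]; omega
  simp only [hc, hiff]

lemma mulVec_nn {m n : ℕ} (M : Matrix (Fin m) (Fin n) ℝ)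
    (hM : ∀ i j, 0 ≤ M i j) {v : Fin n → ℝ} (hv : ∀ j, 0 ≤ v j) (i : Fin m) :
    0 ≤ M.mulVec v i := by
  simp only [Matrix.mulVec, dotProduct]
  exact Finset.sum_nonneg fun j _ => mul_nonneg (hM i j) (hv j)

/-- Center embedding. -/
def cEmb (L w : ℕ) (hw : 1 ≤ w) : Fin L ↪ Fin (L + (2*w-1) - 1) where
  toFun := fun j => ⟨w-1+j.val, cidx_lt L w hw j⟩
  inj' := by intro a b hab; apply Fin.ext; have := Fin.mk.injEq .. ▸ hab; omega

/-- Inner comparison: braid mulVec dominated by band mulVec on center. -/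
lemma inner_le (L w : ℕ) (hw : 1 ≤ w)
    (u : Fin L → ℝ) (v : Fin (L + (2*w-1) - 1) → ℝ)
    (hv : ∀ j, 0 ≤ v j)
    (huv : ∀ j : Fin L, u j ≤ v ⟨w-1+j.val, cidx_lt L w hw j⟩) (i : Fin L) :
    (braidMat L w).mulVec u i ≤ (bandMat L (2*w-1)).mulVec v i := by
  simp only [Matrix.mulVec, dotProduct]
  calc ∑ j, braidMat L w i j * u j
      ≤ ∑ j : Fin L, bandMat L (2*w-1) i (cEmb L w hw j) * v (cEmb L w hw j) := by
        apply Finset.sum_le_sum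
        intro j _
        have he : bandMat L (2*w-1) i (cEmb L w hw j) = braidMat L w i j :=
          band_center L w hw i j
        rw [he]
        exact mul_le_mul_of_nonneg_left (huv j) (braidMat_nn L w hw i j)
    _ = ∑ j' ∈ Finset.univ.map (cEmb L w hw), bandMat L (2*w-1) i j' * v j' := by
        rw [Finset.sum_map]
    _ ≤ ∑ j', bandMat L (2*w-1) i j' * v j' := by
        apply Finset.sum_le_sum_of_subset_of_nonneg (Finset.subset_univ _)
        intro j' _ _
        exact mul_nonneg (bandMat_nn _ _ _ _) (hv j')

/-- Transpose of band matrix at center index equals braid row. -/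
lemma transpose_center (L w : ℕ) (hw : 1 ≤ w) (i i' : Fin L) :
    (bandMat L (2*w-1)).transpose ⟨w-1+i.val, cidx_lt L w hw i⟩ i'
      = braidMat L w i i' := by
  rw [Matrix.transpose_apply]
  unfold bandMat braidMat
  have hc : ((2*w-1 : ℕ):ℝ) = 2*(w:ℝ)-1 := by
    push_cast [Nat.cast_sub (by omega : 1 ≤ 2*w)]; ring
  have hiff : ((i':ℕ) ≤ w-1+i.val ∧ w-1+i.val < (i':ℕ) + (2*w-1)) ↔ |(i:ℤ)-(i':ℤ)| < (w:ℤ) := by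
    rw [abs_lt]; omega
  simp only [hc, hiff]

theorem stmt_15 (L w : ℕ) (hL : 1 ≤ L) (hw : 1 ≤ w)
    (h : ℝ → ℝ) (hmono : MonotoneOn h (Set.Ici 0)) (hnonneg : ∀ z : ℝ, 0 ≤ z → 0 ≤ h z)
    (y : ℕ → Fin (L + (2 * w - 1) - 1) → ℝ) (z : ℕ → Fin L → ℝ)
    (hyrec : ∀ ℓ : ℕ, y (ℓ + 1) = (bandMat L (2 * w - 1)).transpose.mulVec
      (fun i => h ((bandMat L (2 * w - 1)).mulVec (fun j => h (y ℓ j)) i)))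
    (hzrec : ∀ ℓ : ℕ, z (ℓ + 1) = (braidMat L w).mulVec
      (fun i => h ((braidMat L w).mulVec (fun j => h (z ℓ j)) i)))
    (hy0 : ∀ j, 0 ≤ y 0 j) (hz0 : ∀ i, 0 ≤ z 0 i)
    (hinit : ∀ i : Fin L,
      z 0 i ≤ y 0 ⟨w - 1 + i.val, by have := i.isLt; omega⟩) :
    (∀ ℓ : ℕ, ∀ i : Fin L,
      z ℓ i ≤ y ℓ ⟨w - 1 + i.val, by have := i.isLt; omega⟩) ∧
    ((∀ j, Filter.Tendsto (fun ℓ => y ℓ j) Filter.atTop (nhds 0)) →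
      ∀ i, Filter.Tendsto (fun ℓ => z ℓ i) Filter.atTop (nhds 0)) := by
  have key : ∀ ℓ : ℕ, (∀ j, 0 ≤ y ℓ j) ∧ (∀ i, 0 ≤ z ℓ i) ∧
      ∀ i : Fin L, z ℓ i ≤ y ℓ ⟨w - 1 + i.val, by have := i.isLt; omega⟩ := by
    intro ℓ
    induction ℓ with
    | zero => exact ⟨hy0, hz0, hinit⟩
    | succ ℓ ih =>
      obtain ⟨hyn, hzn, hc⟩ := ih
      -- inner vectors
      set vy : Fin (L + (2*w-1) - 1) → ℝ := fun j => h (y ℓ j) with hvy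
      set vz : Fin L → ℝ := fun j => h (z ℓ j) with hvz
      have hvyn : ∀ j, 0 ≤ vy j := fun j => hnonneg _ (hyn j)
      have hvzn : ∀ j, 0 ≤ vz j := fun j => hnonneg _ (hzn j)
      have hvyz : ∀ j : Fin L, vz j ≤ vy ⟨w-1+j.val, by have := j.isLt; omega⟩ := fun j =>
        hmono (hzn j) (hyn _) (hc j)
      have hinn : ∀ i' : Fin L,
          (braidMat L w).mulVec vz i' ≤ (bandMat L (2*w-1)).mulVec vy i' :=
        inner_le L w hw vz vy hvyn hvyz
      have hinnz : ∀ i', 0 ≤ (braidMat L w).mulVec vz i' :=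
        mulVec_nn _ (braidMat_nn L w hw) hvzn
      have hinny : ∀ i', 0 ≤ (bandMat L (2*w-1)).mulVec vy i' :=
        mulVec_nn _ (bandMat_nn L _) hvyn
      refine ⟨?_, ?_, ?_⟩
      · intro j
        rw [hyrec]
        exact mulVec_nn _ (fun a b => bandMat_nn L _ b a)
          (fun i' => hnonneg _ (hinny i')) j
      · intro i
        rw [hzrec]
        exact mulVec_nn _ (braidMat_nn L w hw)
          (fun i' => hnonneg _ (hinnz i')) i
      · intro i
        rw [hyrec, hzrec]
        simp only [Matrix.mulVec, dotProduct]
        apply Finset.sum_le_sum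
        intro i' _
        rw [transpose_center L w hw i i']
        exact mul_le_mul_of_nonneg_left
          (hmono (hinnz i') (hinny i') (hinn i')) (braidMat_nn L w hw i i')
  refine ⟨fun ℓ => (key ℓ).2.2, ?_⟩
  intro hy i
  have hz : ∀ ℓ, 0 ≤ z ℓ i := fun ℓ => (key ℓ).2.1 i
  have hup : ∀ ℓ, z ℓ i ≤ y ℓ ⟨w - 1 + i.val, by have := i.isLt; omega⟩ :=
    fun ℓ => (key ℓ).2.2 i
  exact squeeze_zero hz hup (hy _)
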